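/- A tournament on n = 2r+1 vertices has the maximal possible number of cyclic triads among all tournaments on n vertices if and only if every vertex has in-degree exactly r. -/

import Mathlib

noncomputable def inDeg {V : Type*} (r : V → V → Prop) (v : V) : ℕ := {u : V | r u v}.ncard

def IsTournament {V : Type*} (r : V → V → Prop) : Prop :=
  (∀ v : V, ¬ r v v) ∧ ∀ u v : V, u ≠ v → (r u v ↔ ¬ r v u)

def CyclicTriad {V : Type*} (r : V → V → Prop) (t : Finset V) : Prop :=
  t.card = 3 ∧ ∃ a ∈ t, ∃ b ∈ t, ∃ c ∈ t,
    a ≠ b ∧ b ≠ c ∧ a ≠ c ∧ r a b ∧ r b c ∧ r c a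

noncomputable def cyclicTriadCount {V : Type*} (r : V → V → Prop) : ℕ :=
  {t : Finset V | CyclicTriad r t}.ncard

open Finset

lemma inDeg_eq_card {n : ℕ} (T : Fin n → Fin n → Prop) (v : Fin n)
    [DecidablePred fun u => T u v] :
    inDeg T v = (Finset.univ.filter (fun u => T u v)).card := by
  rw [inDeg, Set.ncard_eq_toFinset_card']
  simp [Set.toFinset_setOf]

lemma cyclicTriadCount_eq {n : ℕ} (T : Fin n → Fin n → Prop)
    [DecidablePred fun t => CyclicTriad T t] :
    cyclicTriadCount T = (Finset.univ.filter (fun t => CyclicTriad T t)).card := by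
  rw [cyclicTriadCount, Set.ncard_eq_toFinset_card']
  simp [Set.toFinset_setOf]

lemma counting {n : ℕ} (T : Fin n → Fin n → Prop) (hT : IsTournament T) :
    cyclicTriadCount T + ∑ v : Fin n, (inDeg T v).choose 2 = n.choose 3 := by
  classical
  obtain ⟨hirr, hasym⟩ := hT
  have hne : ∀ {x y : Fin n}, T x y → x ≠ y := by
    rintro x y h rfl; exact hirr _ h
  have hnot : ∀ {x y : Fin n}, T x y → ¬ T y x := fun h => (hasym _ _ (hne h)).mp h
  have hdir : ∀ {x y : Fin n}, x ≠ y → ¬ T x y → T y x :=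
    fun hxy h => (hasym _ _ hxy.symm).mpr h
  set D : Fin n → Finset (Fin n) := fun v => univ.filter (fun u => T u v) with hD
  set triads := (univ : Finset (Fin n)).powersetCard 3 with htr
  have h1 : cyclicTriadCount T = (triads.filter (fun t => CyclicTriad T t)).card := by
    rw [cyclicTriadCount_eq]
    congr 1
    ext t
    simp only [mem_filter, mem_univ, true_and, htr, Finset.mem_powersetCard]
    exact ⟨fun h => ⟨⟨fun x _ => mem_univ x, h.1⟩, h⟩, fun h => h.2⟩
  have hsplit := Finset.card_filter_add_card_filter_not
    (s := triads) (p := fun t => CyclicTriad T t)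
  have htc : triads.card = n.choose 3 := by
    simp [htr, Finset.card_powersetCard]
  have h2 : (triads.filter (fun t => ¬ CyclicTriad T t)).card
      = ∑ v : Fin n, (inDeg T v).choose 2 := by
    have hch : ∀ v : Fin n, (inDeg T v).choose 2 = ((D v).powersetCard 2).card := by
      intro v
      rw [inDeg_eq_card, Finset.card_powersetCard]
    simp_rw [hch]
    rw [← Finset.card_sigma]
    symm
    apply Finset.card_bij (fun x _ => insert x.1 x.2)
    · rintro ⟨v, p⟩ hx
      simp only [Finset.mem_sigma, Finset.mem_univ, true_and,
        Finset.mem_powersetCard] at hx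
      obtain ⟨hsub, hp2⟩ := hx
      have hin : ∀ x ∈ p, T x v := by
        intro x hx'
        have := hsub hx'
        simp only [hD, mem_filter] at this
        exact this.2
      have hvp : v ∉ p := fun h => hirr v (hin v h)
      have hcard : (insert v p).card = 3 := by
        rw [Finset.card_insert_of_notMem hvp, hp2]
      simp only [mem_filter, htr, Finset.mem_powersetCard]
      refine ⟨⟨fun x _ => mem_univ x, hcard⟩, ?_⟩
      rintro ⟨hc3, a, ha, b, hb, c, hc, hab, hbc, hac, Tab, Tbc, Tca⟩
      have habc : ({a, b, c} : Finset (Fin n)) = insert v p := by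
        apply Finset.eq_of_subset_of_card_le
        · intro x hx
          simp only [mem_insert, mem_singleton] at hx
          rcases hx with rfl | rfl | rfl <;> assumption
        · rw [hcard]
          rw [Finset.card_insert_of_notMem (by simp [hab, hac]),
            Finset.card_insert_of_notMem (by simp [hbc]), Finset.card_singleton]
      have key : ∀ w ∈ ({a, b, c} : Finset (Fin n)), T v w → False := by
        intro w hw Tw
        have hwv : w ≠ v := (hne Tw).symm
        have hw' : w ∈ insert v p := habc ▸ hw
        have hwp : w ∈ p := (Finset.mem_insert.mp hw').resolve_left hwv
        exact hnot Tw (hin w hwp)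
      have hv : v ∈ ({a, b, c} : Finset (Fin n)) := habc ▸ Finset.mem_insert_self v p
      simp only [mem_insert, mem_singleton] at hv
      rcases hv with rfl | rfl | rfl
      · exact key b (by simp) Tab
      · exact key c (by simp) Tbc
      · exact key a (by simp) Tca
    · rintro ⟨v, p⟩ h1' ⟨v', p'⟩ h2' heq
      simp only [Finset.mem_sigma, Finset.mem_univ, true_and,
        Finset.mem_powersetCard] at h1' h2'
      have hin : ∀ x ∈ p, T x v := by
        intro x hx'
        have := h1'.1 hx'
        simp only [hD, mem_filter] at this
        exact this.2
      have hin' : ∀ x ∈ p', T x v' := by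
        intro x hx'
        have := h2'.1 hx'
        simp only [hD, mem_filter] at this
        exact this.2
      have hvp : v ∉ p := fun h => hirr v (hin v h)
      have hvp' : v' ∉ p' := fun h => hirr v' (hin' v' h)
      have hvv : v = v' := by
        by_contra hne'
        have hv'1 : v' ∈ insert v p := by
          rw [heq]; exact Finset.mem_insert_self v' p'
        have hv'p : v' ∈ p := (Finset.mem_insert.mp hv'1).resolve_left (Ne.symm hne')
        have hv1 : v ∈ insert v' p' := by
          rw [← heq]; exact Finset.mem_insert_self v p
        have hvp'' : v ∈ p' := (Finset.mem_insert.mp hv1).resolve_left hne'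
        exact hnot (hin v' hv'p) (hin' v hvp'')
      subst hvv
      have hpp : p = p' := by
        have := congrArg (fun s => Finset.erase s v) heq
        simpa [Finset.erase_insert hvp, Finset.erase_insert hvp'] using this
      subst hpp
      rfl
    · intro t ht
      simp only [mem_filter, htr, Finset.mem_powersetCard] at ht
      obtain ⟨⟨-, hc3⟩, hnc⟩ := ht
      obtain ⟨a, b, c, hab, hac, hbc, rfl⟩ := Finset.card_eq_three.mp hc3
      have build : ∀ v x y : Fin n, x ≠ y → T x v → T y v →
          insert v ({x, y} : Finset (Fin n)) = ({a, b, c} : Finset (Fin n)) →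
          ∃ z hz, (fun (w : (_ : Fin n) × Finset (Fin n)) (_ : w ∈
            Finset.univ.sigma fun v => (D v).powersetCard 2) => insert w.1 w.2) z hz
            = ({a, b, c} : Finset (Fin n)) := by
        intro v x y hxy Tx Ty hins
        refine ⟨⟨v, {x, y}⟩, ?_, hins⟩
        simp only [Finset.mem_sigma, Finset.mem_univ, true_and,
          Finset.mem_powersetCard]
        constructor
        · intro z hz
          simp only [mem_insert, mem_singleton] at hz
          rcases hz with rfl | rfl <;> simp [hD, Tx, Ty]
        · rw [Finset.card_insert_of_notMem (by simp [hxy]), Finset.card_singleton]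
      by_cases h1' : T a b <;> by_cases h2' : T b c <;> by_cases h3' : T c a
      · exact absurd ⟨hc3, a, by simp, b, by simp, c, by simp,
          hab, hbc, hac, h1', h2', h3'⟩ hnc
      · exact build c a b hab (hdir (Ne.symm hac) h3') h2' (by ext z; simp only [Finset.mem_insert, Finset.mem_singleton]; tauto)
      · exact build b a c hac h1' (hdir hbc h2') (by ext z; simp only [Finset.mem_insert, Finset.mem_singleton]; tauto)
      · exact build b a c hac h1' (hdir hbc h2') (by ext z; simp only [Finset.mem_insert, Finset.mem_singleton]; tauto)
      · exact build a b c hbc (hdir hab h1') h3' rfl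
      · exact build c a b hab (hdir (Ne.symm hac) h3') h2' (by ext z; simp only [Finset.mem_insert, Finset.mem_singleton]; tauto)
      · exact build a b c hbc (hdir hab h1') h3' rfl
      · exact absurd ⟨hc3, a, by simp, c, by simp, b, by simp,
          hac, Ne.symm hbc, hab, hdir (Ne.symm hac) h3', hdir hbc h2', hdir hab h1'⟩ hnc
  rw [h1, ← htc, ← hsplit, h2]

lemma degsum {n : ℕ} (T : Fin n → Fin n → Prop) (hT : IsTournament T) :
    2 * ∑ v : Fin n, inDeg T v = n * n - n := by
  classical
  obtain ⟨hirr, hasym⟩ := hT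
  have hne : ∀ {x y : Fin n}, T x y → x ≠ y := by
    rintro x y h rfl; exact hirr _ h
  set E : Finset (Fin n × Fin n) := (univ ×ˢ univ).filter (fun p => T p.1 p.2) with hE
  set E' : Finset (Fin n × Fin n) := (univ ×ˢ univ).filter (fun p => T p.2 p.1) with hE'
  have hEcard : E.card = ∑ v : Fin n, inDeg T v := by
    rw [hE, Finset.card_filter, Finset.sum_product]
    rw [Finset.sum_comm]
    refine Finset.sum_congr rfl fun v _ => ?_
    rw [inDeg_eq_card, Finset.card_filter]
  have hswap : E.card = E'.card := by
    apply Finset.card_nbij' Prod.swap Prod.swap <;>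
      simp [hE, hE', Set.MapsTo, Set.LeftInvOn, Set.RightInvOn]
  have hoff := Finset.card_filter_add_card_filter_not
    (s := (univ : Finset (Fin n)).offDiag) (p := fun p => T p.1 p.2)
  have e1 : (univ : Finset (Fin n)).offDiag.filter (fun p => T p.1 p.2) = E := by
    ext p
    simp only [hE, mem_filter, Finset.mem_offDiag, mem_product, mem_univ, true_and]
    exact ⟨fun h => h.2, fun h => ⟨hne h, h⟩⟩
  have e2 : (univ : Finset (Fin n)).offDiag.filter (fun p => ¬ T p.1 p.2) = E' := by
    ext p
    simp only [hE', mem_filter, Finset.mem_offDiag, mem_univ, true_and, mem_product]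
    constructor
    · rintro ⟨h1, h2⟩
      exact (hasym _ _ (Ne.symm h1)).mpr h2
    · intro h
      have hne' : p.2 ≠ p.1 := hne h
      exact ⟨Ne.symm hne', (hasym _ _ hne').mp h⟩
  rw [e1, e2, ← hswap] at hoff
  rw [Finset.offDiag_card, Finset.card_univ, Fintype.card_fin] at hoff
  omega

lemma two_mul_choose_two_int (d : ℕ) : 2 * ((d.choose 2 : ℤ)) = (d : ℤ)^2 - d := by
  induction d with
  | zero => simp
  | succ k ih =>
    rw [Nat.choose_succ_succ]
    push_cast [Nat.choose_one_right]
    ring_nf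
    ring_nf at ih
    linarith

lemma choose_key {n r : ℕ} (d : Fin n → ℕ) (h : ∑ v, d v = n * r) :
    ∑ v, (((d v : ℤ)) - r)^2
      = 2 * (∑ v, ((d v).choose 2 : ℤ)) - 2 * ((n : ℤ) * (r.choose 2 : ℤ)) := by
  have hs : ∑ v, ((d v : ℤ)) = (n : ℤ) * r := by exact_mod_cast congrArg (Nat.cast (R := ℤ)) h
  have e1 : ∑ v, (((d v : ℤ)) - r)^2
      = ∑ v, (2 * ((d v).choose 2 : ℤ) - (2 * r - 1) * (d v : ℤ) + r^2) := by
    refine Finset.sum_congr rfl fun v _ => ?_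
    linear_combination (-1 : ℤ) * two_mul_choose_two_int (d v)
  rw [e1]
  rw [Finset.sum_add_distrib, Finset.sum_sub_distrib, ← Finset.mul_sum, ← Finset.mul_sum,
    Finset.sum_const, Finset.card_univ, Fintype.card_fin, hs]
  linear_combination (n : ℤ) * two_mul_choose_two_int r

lemma choose_lb {n r : ℕ} (d : Fin n → ℕ) (h : ∑ v, d v = n * r) :
    n * r.choose 2 ≤ ∑ v, (d v).choose 2 := by
  have hk := choose_key d h
  have hnn : (0 : ℤ) ≤ ∑ v, (((d v : ℤ)) - r)^2 :=
    Finset.sum_nonneg fun v _ => sq_nonneg _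
  have : ((n * r.choose 2 : ℕ) : ℤ) ≤ ((∑ v, (d v).choose 2 : ℕ) : ℤ) := by
    push_cast
    linarith
  exact_mod_cast this

lemma choose_eq {n r : ℕ} (d : Fin n → ℕ) (h : ∑ v, d v = n * r)
    (heq : ∑ v, (d v).choose 2 = n * r.choose 2) : ∀ v, d v = r := by
  have hk := choose_key d h
  have hz : ∑ v, (((d v : ℤ)) - r)^2 = 0 := by
    rw [hk]
    have : ((∑ v, (d v).choose 2 : ℕ) : ℤ) = ((n * r.choose 2 : ℕ) : ℤ) := by
      exact_mod_cast congrArg (Nat.cast (R := ℤ)) heq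
    push_cast at this
    linarith
  intro v
  have := (Finset.sum_eq_zero_iff_of_nonneg fun v _ => sq_nonneg (((d v : ℤ)) - r)).mp hz
    v (Finset.mem_univ v)
  have : ((d v : ℤ)) = r := by nlinarith [this]
  exact_mod_cast this

lemma regular_exists (r n : ℕ) (hn : n = 2 * r + 1) :
    ∃ R : Fin n → Fin n → Prop, IsTournament R ∧ ∀ v, inDeg R v = r := by
  haveI : NeZero n := ⟨by omega⟩
  refine ⟨fun u v => 0 < (v - u).val ∧ (v - u).val ≤ r, ⟨?_, ?_⟩, ?_⟩
  · intro v; simp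
  · intro u v huv
    have h0 : ((v - u) + (u - v) : Fin n) = 0 := by rw [sub_add_sub_cancel, sub_self]
    have hval : ((v - u).val + (u - v).val) % n = 0 := by
      have := congrArg Fin.val h0
      rwa [Fin.val_add] at this
    have h1 : (v - u : Fin n) ≠ 0 := sub_ne_zero.mpr (Ne.symm huv)
    have h2 : (u - v : Fin n) ≠ 0 := sub_ne_zero.mpr huv
    have h1' : 0 < (v - u).val := Nat.pos_of_ne_zero (fun h => h1 (Fin.ext h))
    have h2' : 0 < (u - v).val := Nat.pos_of_ne_zero (fun h => h2 (Fin.ext h))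
    have hlt1 : (v - u).val < n := (v - u).isLt
    have hlt2 : (u - v).val < n := (u - v).isLt
    have hsum : (v - u).val + (u - v).val = n := by
      obtain ⟨k, hk⟩ := Nat.dvd_of_mod_eq_zero hval
      rcases k with _ | _ | k
      · omega
      · omega
      · rw [Nat.mul_succ, Nat.mul_succ] at hk
        omega
    constructor
    · rintro ⟨ha, hb⟩ ⟨hc, hd⟩; omega
    · intro h
      constructor
      · omega
      · by_contra hcon
        exact h ⟨by omega, by omega⟩
  · intro v
    rw [inDeg_eq_card]
    have step1 : (Finset.univ.filter
        (fun u : Fin n => 0 < (v - u).val ∧ (v - u).val ≤ r)).card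
        = (Finset.univ.filter (fun w : Fin n => 0 < w.val ∧ w.val ≤ r)).card := by
      apply Finset.card_nbij (fun u => v - u)
      · intro u hu
        simp only [coe_filter, mem_filter, mem_univ, true_and, Set.mem_setOf_eq] at hu ⊢
        exact hu
      · intro a _ b _ hab
        exact sub_right_injective hab
      · intro w hw
        simp only [Finset.coe_filter, Set.mem_setOf_eq, mem_univ, true_and,
          Set.mem_image] at hw ⊢
        exact ⟨v - w, by simpa [sub_sub_cancel] using hw, sub_sub_cancel v w⟩
    rw [step1]
    have step2 : (Finset.univ.filter (fun w : Fin n => 0 < w.val ∧ w.val ≤ r)).card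
        = (Finset.Ioc 0 r).card := by
      apply Finset.card_nbij (fun w => w.val)
      · intro w hw
        simp only [coe_filter, mem_filter, mem_univ, true_and, Set.mem_setOf_eq] at hw
        simp only [Finset.coe_Ioc, Set.mem_Ioc]
        exact hw
      · intro a _ b _ hab
        exact Fin.val_injective hab
      · intro k hk
        simp only [Finset.coe_filter, Finset.mem_coe, Finset.mem_Ioc, Set.mem_setOf_eq,
          mem_univ, true_and, Set.mem_image] at hk ⊢
        have hkn : k < n := by omega
        exact ⟨⟨k, hkn⟩, by simpa using hk, rfl⟩
    rw [step2, Nat.card_Ioc]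
    omega

theorem max_cyclic_iff_regular_odd (r n : ℕ) (hn : n = 2 * r + 1)
    (T : Fin n → Fin n → Prop) (hT : IsTournament T) :
    (∀ T' : Fin n → Fin n → Prop, IsTournament T' →
        cyclicTriadCount T' ≤ cyclicTriadCount T) ↔
      (∀ v : Fin n, inDeg T v = r) := by
  classical
  have hdeg : ∀ (T' : Fin n → Fin n → Prop), IsTournament T' →
      ∑ v : Fin n, inDeg T' v = n * r := by
    intro T' hT'
    have h2 := degsum T' hT'
    have hx : n * n = 2 * (n * r) + n := by subst hn; ring
    omega
  obtain ⟨R, hR, hRdeg⟩ := regular_exists r n hn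
  have hcR := counting R hR
  have hcT := counting T hT
  have hRsum : ∑ v : Fin n, (inDeg R v).choose 2 = n * r.choose 2 := by
    simp [hRdeg, Finset.sum_const, Finset.card_univ, mul_comm]
  constructor
  · intro hmax
    have hle := hmax R hR
    have hS : ∑ v : Fin n, (inDeg T v).choose 2 ≤ n * r.choose 2 := by omega
    have hge := choose_lb (fun v => inDeg T v) (hdeg T hT)
    exact choose_eq (fun v => inDeg T v) (hdeg T hT) (le_antisymm hS hge)
  · intro hreg T' hT'
    have h1 : ∑ v : Fin n, (inDeg T v).choose 2 = n * r.choose 2 := by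
      simp [hreg, Finset.sum_const, Finset.card_univ, mul_comm]
    have h2 := choose_lb (fun v => inDeg T' v) (hdeg T' hT')
    have hcT' := counting T' hT'
    omega
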